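/- (Commutation of the heat semigroup with the derivative.) Let f : ℝ → ℝ be differentiable, with f and its derivative f′ continuous and of polynomial growth. Then for every t > 0 the function x ↦ P_t f(x) is differentiable on ℝ and (d/dx)(P_t f)(x) = P_t f′(x) for every x ∈ ℝ. -/

import Mathlib

open MeasureTheory

/-- The heat kernel `p_t(x) = (1/√(2πt)) e^{−x²/(2t)}`. -/
noncomputable def heatKernel (t x : ℝ) : ℝ :=
  (Real.sqrt (2 * Real.pi * t))⁻¹ * Real.exp (-x ^ 2 / (2 * t))

/-- The heat semigroup `P_t f(x) = ∫_ℝ p_t(x−y) f(y) dy`. -/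
noncomputable def heatSemigroup (t : ℝ) (f : ℝ → ℝ) (x : ℝ) : ℝ :=
  ∫ y, heatKernel t (x - y) * f y

/-- `f` is of polynomial growth: `|f(x)| ≤ C(1 + |x|^k)` for some `C ≥ 0`, `k ∈ ℕ`. -/
def PolyGrowth (f : ℝ → ℝ) : Prop :=
  ∃ C : ℝ, ∃ k : ℕ, 0 ≤ C ∧ ∀ x : ℝ, |f x| ≤ C * (1 + |x| ^ k)

lemma heatKernel_nonneg (t x : ℝ) : 0 ≤ heatKernel t x := by
  unfold heatKernel; positivity

lemma continuous_heatKernel (t : ℝ) : Continuous fun x => heatKernel t x := by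
  unfold heatKernel
  exact continuous_const.mul (Real.continuous_exp.comp
    (((continuous_pow 2).neg).div_const _))

lemma one_add_pow_le (u : ℝ) (hu : 0 ≤ u) (k : ℕ) :
    (1 + u) ^ k ≤ 2 ^ k * (1 + u ^ k) := by
  rcases le_total u 1 with h | h
  · calc (1 + u) ^ k ≤ 2 ^ k := pow_le_pow_left₀ (by positivity) (by linarith) k
      _ ≤ 2 ^ k * (1 + u ^ k) := by
          have : (0:ℝ) ≤ u ^ k := pow_nonneg hu k
          nlinarith [pow_pos (show (0:ℝ) < 2 by norm_num) k]
  · calc (1 + u) ^ k ≤ (2 * u) ^ k := pow_le_pow_left₀ (by positivity) (by linarith) k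
      _ = 2 ^ k * u ^ k := mul_pow 2 u k
      _ ≤ 2 ^ k * (1 + u ^ k) := by
          have : (0:ℝ) < 2 ^ k := pow_pos (by norm_num) k
          nlinarith

lemma aux_bound (C A : ℝ) (hC : 0 ≤ C) (hA : 0 ≤ A) (k : ℕ) (a : ℝ) :
    C * (1 + (A + |a|) ^ k) ≤ (2 * C * ((A + 1) * 2) ^ k) * (1 + |a| ^ k) := by
  have ha : (0:ℝ) ≤ |a| := abs_nonneg a
  have h1 : A + |a| ≤ (A + 1) * (1 + |a|) := by nlinarith
  have h2 : (A + |a|) ^ k ≤ ((A + 1) * (1 + |a|)) ^ k :=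
    pow_le_pow_left₀ (by positivity) h1 k
  have h3 : ((A + 1) * (1 + |a|)) ^ k = (A + 1) ^ k * (1 + |a|) ^ k := mul_pow _ _ _
  have h4 : (1 + |a|) ^ k ≤ 2 ^ k * (1 + |a| ^ k) := one_add_pow_le _ ha k
  have hA1 : (1:ℝ) ≤ (A + 1) ^ k := one_le_pow₀ (by linarith)
  have h2k : (1:ℝ) ≤ 2 ^ k := one_le_pow₀ (by norm_num)
  have hak : (1:ℝ) ≤ 1 + |a| ^ k := by nlinarith [pow_nonneg ha k]
  have hX : (A + |a|) ^ k ≤ (A + 1) ^ k * (2 ^ k * (1 + |a| ^ k)) := by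
    calc (A + |a|) ^ k ≤ (A + 1) ^ k * (1 + |a|) ^ k := h3 ▸ h2
      _ ≤ (A + 1) ^ k * (2 ^ k * (1 + |a| ^ k)) :=
        mul_le_mul_of_nonneg_left h4 (by positivity)
  have h5 : (1:ℝ) ≤ 2 ^ k * (1 + |a| ^ k) := by
    have := mul_le_mul h2k hak zero_le_one (by positivity : (0:ℝ) ≤ 2 ^ k)
    linarith
  have hX1 : (1:ℝ) ≤ (A + 1) ^ k * (2 ^ k * (1 + |a| ^ k)) := by
    have := mul_le_mul hA1 h5 zero_le_one (by positivity : (0:ℝ) ≤ (A + 1) ^ k)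
    linarith
  have key : 1 + (A + |a|) ^ k ≤ 2 * ((A + 1) ^ k * (2 ^ k * (1 + |a| ^ k))) := by
    nlinarith
  calc C * (1 + (A + |a|) ^ k) ≤ C * (2 * ((A + 1) ^ k * (2 ^ k * (1 + |a| ^ k)))) :=
        mul_le_mul_of_nonneg_left key hC
    _ = (2 * C * ((A + 1) * 2) ^ k) * (1 + |a| ^ k) := by rw [mul_pow]; ring

lemma integrable_heatKernel_one_add_pow {t : ℝ} (ht : 0 < t) (k : ℕ) :
    Integrable (fun a : ℝ => heatKernel t a * (1 + |a| ^ k)) := by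
  set c := (Real.sqrt (2 * Real.pi * t))⁻¹ with hc
  have hc0 : 0 ≤ c := by positivity
  set b := (2 * t)⁻¹ with hbdef
  have hb0 : 0 < b := by positivity
  have hM : Integrable (fun a : ℝ =>
      (c * (2 + (k.factorial : ℝ) * (2 / b) ^ k)) * Real.exp (-(b / 2) * a ^ 2)) :=
    (integrable_exp_neg_mul_sq (by positivity)).const_mul _
  refine hM.mono' ?_ ?_
  · exact ((continuous_heatKernel t).mul
      (continuous_const.add (continuous_abs.pow k))).aestronglyMeasurable
  · filter_upwards with a
    have ha : (0:ℝ) ≤ |a| := abs_nonneg a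
    set E := Real.exp (-(b / 2) * a ^ 2) with hEdef
    have hE0 : 0 < E := Real.exp_pos _
    have hE1 : E ≤ 1 := Real.exp_le_one_iff.mpr (by nlinarith [sq_nonneg a])
    have hEE : Real.exp (-a ^ 2 / (2 * t)) = E * E := by
      rw [hEdef, ← Real.exp_add]
      congr 1
      rw [hbdef]
      field_simp
      ring
    have hprod : E * Real.exp ((b / 2) * a ^ 2) = 1 := by
      rw [hEdef, ← Real.exp_add]
      simp
    -- |a|^k ≤ 1 + (a^2)^k
    have h1 : |a| ^ k ≤ 1 + (a ^ 2) ^ k := by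
      have e1 : (|a| ^ k) ^ 2 = (a ^ 2) ^ k := by
        rw [← pow_mul, mul_comm, pow_mul, sq_abs]
      nlinarith [sq_nonneg (|a| ^ k - 1), pow_nonneg ha k]
    -- (a^2)^k ≤ k! * (2/b)^k * exp((b/2) a^2)
    have h2 : (a ^ 2) ^ k ≤ (k.factorial : ℝ) * (2 / b) ^ k * Real.exp ((b / 2) * a ^ 2) := by
      have key := Real.pow_div_factorial_le_exp (x := (b / 2) * a ^ 2)
        (by positivity) k
      have hfk : (0:ℝ) < (k.factorial : ℝ) := by positivity
      have e2 : a ^ 2 = ((b / 2) * a ^ 2) * (2 / b) := by field_simp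
      have e3 : (a ^ 2) ^ k = ((b / 2) * a ^ 2) ^ k * (2 / b) ^ k := by
        rw [← mul_pow, ← e2]
      have h4 : ((b / 2) * a ^ 2) ^ k ≤ (k.factorial : ℝ) * Real.exp ((b / 2) * a ^ 2) := by
        rw [div_le_iff₀ hfk] at key
        linarith [key]
      calc (a ^ 2) ^ k = ((b / 2) * a ^ 2) ^ k * (2 / b) ^ k := e3
        _ ≤ ((k.factorial : ℝ) * Real.exp ((b / 2) * a ^ 2)) * (2 / b) ^ k :=
          mul_le_mul_of_nonneg_right h4 (by positivity)
        _ = (k.factorial : ℝ) * (2 / b) ^ k * Real.exp ((b / 2) * a ^ 2) := by ring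
    have hnonneg : 0 ≤ heatKernel t a * (1 + |a| ^ k) := by
      have := heatKernel_nonneg t a
      have := pow_nonneg ha k
      positivity
    rw [Real.norm_eq_abs, abs_of_nonneg hnonneg]
    have hker : heatKernel t a = c * (E * E) := by
      rw [heatKernel, ← hc, hEE]
    rw [hker]
    set K := (k.factorial : ℝ) * (2 / b) ^ k with hKdef
    have hK0 : 0 ≤ K := by positivity
    set F := Real.exp ((b / 2) * a ^ 2) with hFdef
    have hF0 : 0 < F := Real.exp_pos _
    -- goal: c * (E*E) * (1 + |a|^k) ≤ c * (2 + K) * E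
    have step1 : c * (E * E) * (1 + |a| ^ k) ≤ c * (E * E) * (2 + K * F) := by
      apply mul_le_mul_of_nonneg_left _ (by positivity)
      have := h1
      have := h2
      linarith
    have step2 : c * (E * E) * (2 + K * F) = 2 * c * (E * E) + c * K * E * (E * F) := by
      ring
    have step3 : 2 * c * (E * E) + c * K * E * (E * F) ≤ 2 * c * E + c * K * E := by
      have i1 : 2 * c * (E * E) ≤ 2 * c * E := by
        nlinarith [mul_nonneg (mul_nonneg hc0 hE0.le) (sub_nonneg.mpr hE1)]
      have i2 : c * K * E * (E * F) = c * K * E := by rw [hprod]; ring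
      linarith
    calc c * (E * E) * (1 + |a| ^ k) ≤ 2 * c * E + c * K * E := by
          rw [← step2] at step3; linarith [step1, step3]
      _ = c * (2 + K) * E := by ring

lemma integrable_heatKernel_mul {t : ℝ} (ht : 0 < t) {g : ℝ → ℝ} (hg : Continuous g)
    {C : ℝ} {k : ℕ} (hC : 0 ≤ C) (hbd : ∀ a, |g a| ≤ C * (1 + |a| ^ k)) :
    Integrable fun a => heatKernel t a * g a := by
  refine ((integrable_heatKernel_one_add_pow ht k).const_mul C).mono' ?_ ?_
  · exact ((continuous_heatKernel t).mul hg).aestronglyMeasurable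
  · filter_upwards with a
    rw [Real.norm_eq_abs, abs_mul, abs_of_nonneg (heatKernel_nonneg t a)]
    calc heatKernel t a * |g a| ≤ heatKernel t a * (C * (1 + |a| ^ k)) :=
          mul_le_mul_of_nonneg_left (hbd a) (heatKernel_nonneg t a)
      _ = C * (heatKernel t a * (1 + |a| ^ k)) := by ring

lemma integrable_heatKernel_comp_sub {t : ℝ} (ht : 0 < t) {g : ℝ → ℝ} (hg : Continuous g)
    {C : ℝ} {k : ℕ} (hC : 0 ≤ C) (hbd : ∀ y, |g y| ≤ C * (1 + |y| ^ k)) (x : ℝ) :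
    Integrable fun a => heatKernel t a * g (x - a) := by
  refine integrable_heatKernel_mul ht (hg.comp (continuous_const.sub continuous_id))
    (C := 2 * C * ((|x| + 1) * 2) ^ k) (k := k) (by positivity) ?_
  intro a
  have h1 : |x - a| ≤ |x| + |a| := abs_sub x a
  have h2 : |x - a| ^ k ≤ (|x| + |a|) ^ k := pow_le_pow_left₀ (abs_nonneg _) h1 k
  calc |g (x - a)| ≤ C * (1 + |x - a| ^ k) := hbd _
    _ ≤ C * (1 + (|x| + |a|) ^ k) := mul_le_mul_of_nonneg_left (by linarith) hC
    _ ≤ (2 * C * ((|x| + 1) * 2) ^ k) * (1 + |a| ^ k) :=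
      aux_bound C |x| hC (abs_nonneg x) k a

/-- The heat semigroup commutes with the derivative:
`(d/dx)(P_t f)(x) = P_t f′(x)` for `f` differentiable with `f`, `f′`
continuous and of polynomial growth. -/
theorem heatSemigroup_deriv_comm
    (f f' : ℝ → ℝ) (hderiv : ∀ x : ℝ, HasDerivAt f (f' x) x)
    (hf : Continuous f) (hfpg : PolyGrowth f)
    (hf' : Continuous f') (hf'pg : PolyGrowth f') :
    ∀ t : ℝ, 0 < t → ∀ x : ℝ,
      HasDerivAt (fun y => heatSemigroup t f y) (heatSemigroup t f' x) x := by
  intro t ht x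
  obtain ⟨C, k, hC, hbC⟩ := hf'pg
  obtain ⟨D, m, hD, hbD⟩ := hfpg
  set A := |x| + 1 with hAdef
  have hA0 : (0:ℝ) ≤ A := by positivity
  -- representation via substitution
  have hrepr : ∀ g : ℝ → ℝ, ∀ z : ℝ,
      heatSemigroup t g z = ∫ a, heatKernel t a * g (z - a) := by
    intro g z
    rw [heatSemigroup]
    have h := integral_sub_left_eq_self (fun y => heatKernel t (z - y) * g y)
      (volume : Measure ℝ) z
    rw [← h]
    congr 1
    funext a
    rw [sub_sub_cancel]
  have main := hasDerivAt_integral_of_dominated_loc_of_deriv_le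
    (μ := (volume : Measure ℝ)) (x₀ := x)
    (F := fun y a => heatKernel t a * f (y - a))
    (F' := fun y a => heatKernel t a * f' (y - a))
    (bound := fun a => heatKernel t a * (C * (1 + (A + |a|) ^ k)))
    (s := Metric.ball x 1) (Metric.ball_mem_nhds x one_pos)
    (Filter.Eventually.of_forall fun y =>
      ((continuous_heatKernel t).mul
        (hf.comp (continuous_const.sub continuous_id))).aestronglyMeasurable)
    (integrable_heatKernel_comp_sub ht hf hD hbD x)
    (((continuous_heatKernel t).mul
        (hf'.comp (continuous_const.sub continuous_id))).aestronglyMeasurable)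
    (ae_of_all _ fun a y hy => by
      have hy1 : |y - x| < 1 := by
        rwa [Metric.mem_ball, Real.dist_eq] at hy
      have hy2 : |y| ≤ A := by
        have := abs_sub_abs_le_abs_sub y x
        rw [hAdef]; linarith
      have h1 : |y - a| ≤ A + |a| := by
        have := abs_sub y a
        linarith
      have h2 : |y - a| ^ k ≤ (A + |a|) ^ k := pow_le_pow_left₀ (abs_nonneg _) h1 k
      rw [Real.norm_eq_abs, abs_mul, abs_of_nonneg (heatKernel_nonneg t a)]
      calc heatKernel t a * |f' (y - a)| ≤ heatKernel t a * (C * (1 + |y - a| ^ k)) :=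
            mul_le_mul_of_nonneg_left (hbC _) (heatKernel_nonneg t a)
        _ ≤ heatKernel t a * (C * (1 + (A + |a|) ^ k)) := by
            apply mul_le_mul_of_nonneg_left _ (heatKernel_nonneg t a)
            exact mul_le_mul_of_nonneg_left (by linarith) hC
    )
    (by
      refine integrable_heatKernel_mul ht ?_
        (C := 2 * C * ((A + 1) * 2) ^ k) (k := k) (by positivity) ?_
      · exact continuous_const.mul (continuous_const.add
          ((continuous_const.add continuous_abs).pow k))
      · intro a
        have hnn : 0 ≤ C * (1 + (A + |a|) ^ k) := by positivity
        rw [abs_of_nonneg hnn]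
        exact aux_bound C A hC hA0 k a)
    (ae_of_all _ fun a y _ => by
      have h := ((hderiv (y - a)).comp y ((hasDerivAt_id y).sub_const a)).const_mul
        (heatKernel t a)
      simpa using h)
  have h2 := main.2
  have e1 : (fun y => heatSemigroup t f y) = fun y => ∫ a, heatKernel t a * f (y - a) :=
    funext fun z => hrepr f z
  rw [e1, hrepr f']
  exact h2
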